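/- Let M, L ∈ ℝ^{2n×2n} form a symplectic matrix pencil, i.e. M J Mᵀ = L J Lᵀ where J = [[0, Iₙ],[-Iₙ, 0]]. Suppose M⋆, L⋆ ∈ ℝ^{2n×2n} satisfy rank[M⋆, L⋆] = 2n and M⋆ L = L⋆ M, and set M̂ = M⋆ M, L̂ = L⋆ L (a doubling transformation of M − λL). Then M̂ − λL̂ is also a symplectic matrix pencil, i.e. M̂ J M̂ᵀ = L̂ J L̂ᵀ. -/

import Mathlib

open Matrix

theorem stmt_0 (n : ℕ)
    (M L Mst Lst J : Matrix (Fin n ⊕ Fin n) (Fin n ⊕ Fin n) ℝ)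
    (hJ : J = fromBlocks 0 1 (-1) 0)
    (hsymp : M * J * Mᵀ = L * J * Lᵀ)
    (hrank : (fromCols Mst Lst).rank = 2 * n)
    (hswap : Mst * L = Lst * M) :
    (Mst * M) * J * (Mst * M)ᵀ = (Lst * L) * J * (Lst * L)ᵀ := by
  calc (Mst * M) * J * (Mst * M)ᵀ
      = Mst * (M * J * Mᵀ) * Mstᵀ := by
        simp [Matrix.transpose_mul, Matrix.mul_assoc]
    _ = Mst * (L * J * Lᵀ) * Mstᵀ := by rw [hsymp]
    _ = (Mst * L) * J * (Mst * L)ᵀ := by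
        simp [Matrix.transpose_mul, Matrix.mul_assoc]
    _ = (Lst * M) * J * (Lst * M)ᵀ := by rw [hswap]
    _ = Lst * (M * J * Mᵀ) * Lstᵀ := by
        simp [Matrix.transpose_mul, Matrix.mul_assoc]
    _ = Lst * (L * J * Lᵀ) * Lstᵀ := by rw [hsymp]
    _ = (Lst * L) * J * (Lst * L)ᵀ := by
        simp [Matrix.transpose_mul, Matrix.mul_assoc]
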